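/- Fix an integer m ≥ 1 and define Q : ℕ → {0,1,…,m} → ℝ by Q_0(0) = 1, Q_0(k) = 0 for k ≥ 1, and for d ≥ 1: Q_d(k) = (1/2)·[Q_{d−1}(k−1)·(m−k+1)/m + Q_{d−1}(k)·(m+k)/m], with the convention Q_{d−1}(−1) = 0. Then the fraction of nodes at depth d whose order is at most m−1 tends to zero: lim_{d→∞} Σ_{k=0}^{m−1} Q_d(k) = 0. -/

import Mathlib

/-- Fix `m ≥ 1` and let `Q : ℕ → ℤ → ℝ` (restricted to `k ∈ {0,…,m}`) satisfy
`Q 0 0 = 1`, `Q 0 k = 0` for `1 ≤ k ≤ m`, the convention `Q d (-1) = 0`, and for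
`d ≥ 1` and `0 ≤ k ≤ m`:
`Q d k = (1/2)·[Q (d-1) (k-1)·(m−k+1)/m + Q (d-1) k·(m+k)/m]`.
Then the fraction of nodes at depth `d` whose order is at most `m − 1` tends to
zero: `lim_{d→∞} ∑_{k=0}^{m−1} Q d k = 0`. -/
theorem Q_low_order_sum_tendsto_zero (m : ℕ) (hm : 1 ≤ m) (Q : ℕ → ℤ → ℝ)
    (h00 : Q 0 0 = 1)
    (h0 : ∀ k : ℤ, 1 ≤ k → k ≤ (m : ℤ) → Q 0 k = 0)
    (hneg : ∀ d : ℕ, Q d (-1) = 0)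
    (hrec : ∀ d : ℕ, ∀ k : ℤ, 0 ≤ k → k ≤ (m : ℤ) →
      Q (d + 1) k = (1 / 2) *
        (Q d (k - 1) * ((m : ℝ) - (k : ℝ) + 1) / (m : ℝ) +
          Q d k * ((m : ℝ) + (k : ℝ)) / (m : ℝ))) :
    Filter.Tendsto (fun d : ℕ => ∑ k ∈ Finset.range m, Q d (k : ℤ))
      Filter.atTop (nhds 0) := by
  obtain ⟨M, rfl⟩ : ∃ M, m = M + 1 := ⟨m - 1, by omega⟩
  set m := M + 1 with hmdef
  have hm0 : (0:ℝ) < m := by positivity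
  -- nonnegativity of Q on [0,m]
  have hQnn : ∀ d, ∀ k : ℤ, 0 ≤ k → k ≤ (m:ℤ) → 0 ≤ Q d k := by
    intro d
    induction d with
    | zero =>
      intro k hk0 hkm
      rcases eq_or_lt_of_le hk0 with h | h
      · rw [← h, h00]; norm_num
      · rw [h0 k h hkm]
    | succ d ih =>
      intro k hk0 hkm
      rw [hrec d k hk0 hkm]
      have h1 : 0 ≤ Q d (k - 1) := by
        rcases eq_or_lt_of_le hk0 with h | h
        · rw [← h]; simpa using (hneg d).ge
        · exact ih (k - 1) (by omega) (by omega)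
      have h2 : 0 ≤ Q d k := ih k hk0 hkm
      have hc1 : (0:ℝ) ≤ (m:ℝ) - (k:ℝ) + 1 := by
        have : (k:ℝ) ≤ (m:ℝ) := by exact_mod_cast hkm
        linarith
      have hc2 : (0:ℝ) ≤ (m:ℝ) + (k:ℝ) := by
        have : (0:ℝ) ≤ (k:ℝ) := by exact_mod_cast hk0
        linarith
      have := add_nonneg (div_nonneg (mul_nonneg h1 hc1) hm0.le)
        (div_nonneg (mul_nonneg h2 hc2) hm0.le)
      linarith
  set c : ℝ := 1 - 1 / (2 * m) with hc
  have hc0 : 0 ≤ c := by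
    rw [hc]
    have : 1 / (2 * (m:ℝ)) ≤ 1 := by
      rw [div_le_one (by positivity)]
      have : (1:ℝ) ≤ (m:ℝ) := by exact_mod_cast hm
      linarith
    linarith
  have hc1 : c < 1 := by
    rw [hc]
    have : 0 < 1 / (2 * (m:ℝ)) := by positivity
    linarith
  set W : ℕ → ℝ := fun d => ∑ k ∈ Finset.range m, (2:ℝ) ^ (M - k) * Q d (k : ℤ) with hW
  -- key contraction step
  have key : ∀ d, W (d + 1) ≤ c * W d := by
    intro d
    have e1 : W (d + 1) = (1 / (2 * m)) *
        ((∑ k ∈ Finset.range m, (2:ℝ) ^ (M - k) * (Q d ((k:ℤ) - 1) * ((m:ℝ) - k + 1))) +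
         (∑ k ∈ Finset.range m, (2:ℝ) ^ (M - k) * (Q d (k:ℤ) * ((m:ℝ) + k)))) := by
      rw [hW]
      rw [← Finset.sum_add_distrib, Finset.mul_sum]
      refine Finset.sum_congr rfl fun k hk => ?_
      have hkm : (k:ℤ) ≤ (m:ℤ) := by
        have := Finset.mem_range.mp hk; exact_mod_cast this.le
      rw [hrec d k (by positivity) hkm]
      push_cast
      field_simp
    -- shift the first sum
    have e2 : (∑ k ∈ Finset.range m, (2:ℝ) ^ (M - k) * (Q d ((k:ℤ) - 1) * ((m:ℝ) - k + 1)))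
        = ∑ j ∈ Finset.range M, (2:ℝ) ^ (M - (j+1)) * (Q d (j:ℤ) * ((m:ℝ) - j)) := by
      rw [Finset.sum_range_succ']
      have hz : Q d (((0:ℕ):ℤ) - 1) = 0 := by norm_num [hneg d]
      rw [hz]
      simp only [mul_zero, zero_mul, add_zero]
      refine Finset.sum_congr rfl fun j hj => ?_
      have hcast : ((j+1:ℕ):ℤ) - 1 = (j:ℤ) := by push_cast; ring
      rw [hcast]
      push_cast
      ring
    rw [e1, e2]
    -- reduce to the un-prefactored inequality
    have hfac : (0:ℝ) < 1 / (2 * m) := by positivity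
    have hcW : c * W d = (1 / (2 * m)) *
        (∑ k ∈ Finset.range m, (2 * (m:ℝ) - 1) * ((2:ℝ) ^ (M - k) * Q d (k:ℤ))) := by
      rw [hW, Finset.mul_sum, Finset.mul_sum]
      refine Finset.sum_congr rfl fun k hk => ?_
      rw [hc]
      field_simp
    rw [hcW]
    apply mul_le_mul_of_nonneg_left _ hfac.le
    -- split off top term k = M
    rw [Finset.sum_range_succ, Finset.sum_range_succ (n := M)
      (f := fun k => (2 * (m:ℝ) - 1) * ((2:ℝ) ^ (M - k) * Q d (k:ℤ)))]
    have htop : (2:ℝ) ^ (M - M) * (Q d (M:ℤ) * ((m:ℝ) + M))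
        = (2 * (m:ℝ) - 1) * ((2:ℝ) ^ (M - M) * Q d (M:ℤ)) := by
      simp only [Nat.sub_self, pow_zero, one_mul]
      have : (m:ℝ) = (M:ℝ) + 1 := by push_cast [hmdef]; ring
      rw [this]; ring
    rw [htop, ← add_assoc]
    apply add_le_add_left
    rw [← Finset.sum_add_distrib]
    apply Finset.sum_le_sum
    intro j hj
    have hjM : j < M := Finset.mem_range.mp hj
    have hQj : 0 ≤ Q d (j:ℤ) := hQnn d j (by positivity) (by exact_mod_cast Nat.le_of_lt (by omega))
    have hpow : (2:ℝ) ^ (M - j) = 2 * (2:ℝ) ^ (M - (j+1)) := by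
      rw [← pow_succ']
      congr 1
      omega
    rw [hpow]
    have hppos : (0:ℝ) < (2:ℝ) ^ (M - (j+1)) := by positivity
    have hjle : (j:ℝ) ≤ (m:ℝ) - 2 := by
      have : (j:ℝ) ≤ (M:ℝ) - 1 := by
        have : (j:ℝ) + 1 ≤ (M:ℝ) := by exact_mod_cast hjM
        linarith
      have : (m:ℝ) = (M:ℝ) + 1 := by push_cast [hmdef]; ring
      linarith
    nlinarith [mul_nonneg hppos.le hQj, mul_nonneg (mul_nonneg hppos.le hQj) (by linarith : (0:ℝ) ≤ (m:ℝ) - 2 - j)]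
  -- W 0 = 2^M
  have hW0 : W 0 = (2:ℝ) ^ M := by
    show (∑ k ∈ Finset.range m, (2:ℝ) ^ (M - k) * Q 0 (k:ℤ)) = (2:ℝ) ^ M
    rw [Finset.sum_eq_single 0]
    · simp [h00]
    · intro k hk hk0
      have hk1 : 1 ≤ (k:ℤ) := by exact_mod_cast Nat.one_le_iff_ne_zero.mpr hk0
      have hkm : (k:ℤ) ≤ (m:ℤ) := by
        have := Finset.mem_range.mp hk; exact_mod_cast this.le
      rw [h0 k hk1 hkm, mul_zero]
    · intro h; exact absurd (Finset.mem_range.mpr (by omega)) h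
  -- W d ≤ c^d * 2^M
  have hWle : ∀ d, W d ≤ c ^ d * (2:ℝ) ^ M := by
    intro d
    induction d with
    | zero => simp [hW0]
    | succ d ih =>
      calc W (d+1) ≤ c * W d := key d
        _ ≤ c * (c ^ d * 2 ^ M) := by exact mul_le_mul_of_nonneg_left ih hc0
        _ = c ^ (d+1) * 2 ^ M := by ring
  -- squeeze
  have hSnn : ∀ d, 0 ≤ ∑ k ∈ Finset.range m, Q d (k:ℤ) := by
    intro d
    apply Finset.sum_nonneg
    intro k hk
    exact hQnn d k (by positivity) (by exact_mod_cast (Finset.mem_range.mp hk).le)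
  have hSW : ∀ d, (∑ k ∈ Finset.range m, Q d (k:ℤ)) ≤ c ^ d * (2:ℝ) ^ M := by
    intro d
    refine le_trans ?_ (hWle d)
    show _ ≤ ∑ k ∈ Finset.range m, (2:ℝ) ^ (M - k) * Q d (k:ℤ)
    apply Finset.sum_le_sum
    intro k hk
    have hQk : 0 ≤ Q d (k:ℤ) := hQnn d k (by positivity) (by exact_mod_cast (Finset.mem_range.mp hk).le)
    have : (1:ℝ) ≤ (2:ℝ) ^ (M - k) := one_le_pow₀ (by norm_num)
    nlinarith
  have hg : Filter.Tendsto (fun d : ℕ => c ^ d * (2:ℝ) ^ M) Filter.atTop (nhds 0) := by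
    have := tendsto_pow_atTop_nhds_zero_of_lt_one hc0 hc1
    simpa using this.mul_const ((2:ℝ) ^ M)
  exact squeeze_zero hSnn hSW hg
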